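/- arXiv:2211.12801 — 2 statements merged into one kernel-verified Lean document; each statement's English description precedes it below -/
import Mathlib

section
/- (Cycle lemma) Let (ξ₁,...,ξ_n) be a sequence of nonnegative integers with ∑_{i=1}^n (ξ_i − 1) = −k for a positive integer k. Then exactly k of the n cyclic shifts of the sequence satisfy ∑_{i=1}^m (ξ_i − 1) > −k for all 1 ≤ m < n. -/
open Finset

/-- Cycle lemma: if `(ξ₁,…,ξ_n)` are nonnegative integers with `∑ (ξᵢ − 1) = −k`, `k > 0`,
then exactly `k` of the `n` cyclic shifts satisfy `∑_{i=1}^m (ξᵢ − 1) > −k` for all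
`1 ≤ m < n`. -/
theorem cycle_lemma (n k : ℕ) (hn : 0 < n) (hk : 0 < k) (ξ : ℕ → ℕ)
    (hsum : (∑ i ∈ range n, (ξ i : ℤ)) - n = -k) :
    Nat.card {j : Fin n //
      ∀ m, 1 ≤ m → m < n →
        (∑ i ∈ range m, (ξ ((j.val + i) % n) : ℤ)) - m > -(k : ℤ)} = k := by
  classical
  set g : ℕ → ℤ := fun i => (ξ (i % n) : ℤ) - 1 with hg
  set S : ℕ → ℤ := fun m => ∑ i ∈ range m, g i with hSdef
  have hstep : ∀ m, S (m + 1) = S m + g m := by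
    intro m; simp [hSdef, Finset.sum_range_succ]
  have hgge : ∀ i, (-1 : ℤ) ≤ g i := by
    intro i
    have : (0 : ℤ) ≤ (ξ (i % n) : ℤ) := Int.ofNat_nonneg _
    simp only [hg]; linarith
  have hgper : ∀ i, g (i + n) = g i := by
    intro i; simp [hg, Nat.add_mod_right]
  have hS0 : S 0 = 0 := by simp [hSdef]
  have hSn : S n = -k := by
    have hc : ∀ i ∈ range n, g i = (ξ i : ℤ) - 1 := by
      intro i hi
      simp [hg, Nat.mod_eq_of_lt (mem_range.mp hi)]
    have : S n = (∑ i ∈ range n, (ξ i : ℤ)) - n := by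
      have h0 : S n = ∑ i ∈ range n, g i := rfl
      rw [h0, Finset.sum_congr rfl hc, Finset.sum_sub_distrib]
      simp
    rw [this, hsum]
  have hper : ∀ m, S (m + n) = S m - k := by
    intro m
    induction m with
    | zero => simpa [hS0] using hSn
    | succ m ih =>
      have : m + 1 + n = (m + n) + 1 := by omega
      rw [this, hstep, ih, hgper, hstep]; ring
  have hshift : ∀ j m, S (j + m) = S j + ∑ i ∈ range m, g (j + i) := by
    intro j m
    induction m with
    | zero => simp
    | succ m ih =>
      have : j + (m + 1) = (j + m) + 1 := by omega
      rw [this, hstep, ih, Finset.sum_range_succ]; ring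
  have hconn : ∀ j m, (∑ i ∈ range m, (ξ ((j + i) % n) : ℤ)) - m = S (j + m) - S j := by
    intro j m
    rw [hshift]
    have : ∑ i ∈ range m, g (j + i)
        = (∑ i ∈ range m, (ξ ((j + i) % n) : ℤ)) - m := by
      simp only [hg]
      rw [Finset.sum_sub_distrib]
      simp
    rw [this]; ring
  -- minimum over the first period
  have hne : (range n).Nonempty := nonempty_range_iff.mpr hn.ne'
  set A : ℤ := (range n).inf' hne S with hA
  have hA_le : ∀ m, m < n → A ≤ S m := by
    intro m hm; exact Finset.inf'_le S (mem_range.mpr hm)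
  obtain ⟨m₀, hm₀mem, hm₀A⟩ := Finset.exists_mem_eq_inf' hne S
  have hm₀ : m₀ < n := mem_range.mp hm₀mem
  -- goodness iff record
  have good_iff : ∀ j : ℕ, j < n →
      ((∀ m, 1 ≤ m → m < n → S (j + m) - S j > -(k : ℤ)) ↔
        (∀ m, m < j + n → S (j + n) < S m)) := by
    intro j hj
    have hjn : S (j + n) = S j - k := hper j
    constructor
    · intro hP m hm
      rcases lt_trichotomy m j with h | h | h
      · have h1 : 1 ≤ m + n - j := by omega
        have h2 : m + n - j < n := by omega
        have hP' := hP (m + n - j) h1 h2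
        have he : j + (m + n - j) = m + n := by omega
        rw [he] at hP'
        have hmn : S (m + n) = S m - k := hper m
        omega
      · subst h; omega
      · have h1 : 1 ≤ m - j := by omega
        have h2 : m - j < n := by omega
        have hP' := hP (m - j) h1 h2
        have he : j + (m - j) = m := by omega
        rw [he] at hP'
        omega
    · intro hR m hm1 hm2
      have := hR (j + m) (by omega)
      omega
  -- existence of records at each value in [A-k, A-1]
  have exists_rec : ∀ v : ℤ, A - k ≤ v → v ≤ A - 1 →
      ∃ j : ℕ, j < n ∧ (∀ m, m < j + n → S (j + n) < S m) ∧ S (j + n) = v := by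
    intro v hv1 hv2
    have hwit : S (m₀ + n) ≤ v := by rw [hper]; omega
    have hQex : ∃ m, S m ≤ v := ⟨m₀ + n, hwit⟩
    set p := Nat.find hQex with hp
    have hpS : S p ≤ v := Nat.find_spec hQex
    have hpmin : ∀ m, m < p → v < S m := by
      intro m hm
      have := Nat.find_min hQex hm
      omega
    have hpn : n ≤ p := by
      by_contra h
      push_neg at h
      have := hA_le p h
      omega
    have hple : p ≤ m₀ + n := Nat.find_le hwit
    have hplt : p < n + n := by omega
    have hpos : 0 < p := by omega
    have hSp : S p = v := by
      obtain ⟨q, hq⟩ : ∃ q, p = q + 1 := ⟨p - 1, by omega⟩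
      have h1 : v < S q := hpmin q (by omega)
      have h2 : S (q + 1) = S q + g q := hstep q
      have h3 : -1 ≤ g q := hgge q
      rw [hq] at hpS ⊢
      omega
    refine ⟨p - n, by omega, ?_, ?_⟩
    · have he : p - n + n = p := by omega
      rw [he]
      intro m hm
      rw [hSp]; exact hpmin m hm
    · have he : p - n + n = p := by omega
      rw [he, hSp]
  -- count
  rw [Nat.card_eq_fintype_card, Fintype.card_subtype]
  have hIcc : (Finset.Icc (A - k) (A - 1)).card = k := by
    rw [Int.card_Icc]; omega
  refine Eq.trans ?_ hIcc
  apply Finset.card_bij (fun j _ => S (j.val + n))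
  · intro a ha
    rw [mem_filter] at ha
    have hrec := (good_iff a.val a.isLt).mp (by
      intro m hm1 hm2
      have := ha.2 m hm1 hm2
      rw [hconn] at this
      exact this)
    have h1 : S (a.val + n) < A := by
      have := hrec m₀ (by omega)
      omega
    have h2 : A - k ≤ S (a.val + n) := by
      have := hper a.val
      have := hA_le a.val a.isLt
      omega
    rw [Finset.mem_Icc]; omega
  · intro a ha b hb hab
    rw [mem_filter] at ha hb
    have hra := (good_iff a.val a.isLt).mp (by
      intro m hm1 hm2
      have := ha.2 m hm1 hm2
      rw [hconn] at this
      exact this)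
    have hrb := (good_iff b.val b.isLt).mp (by
      intro m hm1 hm2
      have := hb.2 m hm1 hm2
      rw [hconn] at this
      exact this)
    by_contra hne'
    rcases lt_trichotomy a.val b.val with h | h | h
    · have := hrb (a.val + n) (by omega)
      omega
    · exact hne' (Fin.ext h)
    · have := hra (b.val + n) (by omega)
      omega
  · intro v hv
    rw [Finset.mem_Icc] at hv
    obtain ⟨j, hjn, hrec, hval⟩ := exists_rec v hv.1 hv.2
    refine ⟨⟨j, hjn⟩, ?_, hval⟩
    rw [mem_filter]
    refine ⟨mem_univ _, ?_⟩
    intro m hm1 hm2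
    rw [hconn]
    exact (good_iff j hjn).mpr hrec m hm1 hm2
end

section
/- Let ξ₁, ξ₂, ... be i.i.d. nonnegative integer-valued random variables and k a positive integer. Then P(∑_{i=1}^m (ξ_i−1) > −k for all 1 ≤ m < n, and ∑_{i=1}^n (ξ_i−1) = −k) = (k/n) · P(∑_{i=1}^n (ξ_i−1) = −k). -/
open MeasureTheory ProbabilityTheory Finset

namespace CycleAux

/-- Partial sums of the periodized walk. -/
def S (n : ℕ) (a : ℕ → ℕ) (m : ℕ) : ℤ := ∑ i ∈ range m, ((a (i % n) : ℤ) - 1)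

variable {n k : ℕ} {a : ℕ → ℕ}

lemma S_zero : S n a 0 = 0 := by simp [S]

lemma S_succ (m : ℕ) : S n a (m + 1) = S n a m + ((a (m % n) : ℤ) - 1) := by
  simp [S, sum_range_succ]; ring

lemma S_step (m : ℕ) : S n a m - 1 ≤ S n a (m + 1) := by
  have : (0 : ℤ) ≤ (a (m % n) : ℤ) := Int.natCast_nonneg _
  rw [S_succ]; linarith

lemma S_add (r m : ℕ) :
    S n a (r + m) = S n a r + ∑ i ∈ range m, ((a ((r + i) % n) : ℤ) - 1) := by
  induction m with
  | zero => simp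
  | succ m ih =>
      rw [← Nat.add_assoc, S_succ, ih, sum_range_succ]
      ring

lemma mod_inv1 (hn : 0 < n) (r i : ℕ) (hi : i < n) :
    ((r + i) % n + (n - r % n)) % n = i := by
  have hrn : r % n ≤ n := le_of_lt (Nat.mod_lt _ hn)
  have h1 : ((r + i) % n + (n - r % n)) % n = ((r + i) + (n - r % n)) % n := by
    rw [Nat.mod_add_mod]
  rw [h1]
  have h2 : r + i + (n - r % n) = i + (n * (r / n) + n) := by
    have := Nat.div_add_mod r n
    omega
  rw [h2]
  have h3 : i + (n * (r / n) + n) = i + n * (r / n + 1) := by ring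
  rw [h3, Nat.add_mul_mod_self_left]
  exact Nat.mod_eq_of_lt hi

lemma mod_inv2 (hn : 0 < n) (r j : ℕ) (hj : j < n) :
    (r + (j + (n - r % n)) % n) % n = j := by
  have hrn : r % n ≤ n := le_of_lt (Nat.mod_lt _ hn)
  have h1 : (r + (j + (n - r % n)) % n) % n = (r + (j + (n - r % n))) % n := by
    rw [Nat.add_mod_mod]
  rw [h1]
  have h2 : r + (j + (n - r % n)) = j + (n * (r / n) + n) := by
    have := Nat.div_add_mod r n
    omega
  rw [h2]
  have h3 : j + (n * (r / n) + n) = j + n * (r / n + 1) := by ring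
  rw [h3, Nat.add_mul_mod_self_left]
  exact Nat.mod_eq_of_lt hj

/-- rotation-invariance of a full-period sum -/
lemma sum_rot {M : Type*} [AddCommMonoid M] (hn : 0 < n) (f : ℕ → M) (r : ℕ) :
    ∑ i ∈ range n, f ((r + i) % n) = ∑ i ∈ range n, f i := by
  apply Finset.sum_nbij' (i := fun i => (r + i) % n)
    (j := fun j => (j + (n - r % n)) % n)
  · intro i hi; exact mem_range.2 (Nat.mod_lt _ hn)
  · intro j hj; exact mem_range.2 (Nat.mod_lt _ hn)
  · intro i hi; exact mod_inv1 hn r i (mem_range.1 hi)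
  · intro j hj; exact mod_inv2 hn r j (mem_range.1 hj)
  · intro i hi; rfl

lemma S_period (hn : 0 < n) (m : ℕ) : S n a (m + n) = S n a m + S n a n := by
  rw [S_add]
  congr 1
  have h := sum_rot hn (fun j => ((a (j % n) : ℤ) - 1)) m
  calc ∑ i ∈ range n, ((a ((m + i) % n) : ℤ) - 1)
      = ∑ i ∈ range n, ((a ((m + i) % n % n) : ℤ) - 1) := by
        refine Finset.sum_congr rfl fun i _ => by rw [Nat.mod_mod_of_dvd _ dvd_rfl]
    _ = ∑ i ∈ range n, ((a (i % n) : ℤ) - 1) := h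
    _ = S n a n := rfl

/-- discrete intermediate value (downward crossing) -/
lemma exists_S_eq {p q : ℕ} (hpq : p ≤ q) {v : ℤ} (hp : v ≤ S n a p)
    (hq : S n a q ≤ v) : ∃ m, p ≤ m ∧ m ≤ q ∧ S n a m = v := by
  induction q with
  | zero =>
      have : p = 0 := Nat.le_zero.1 hpq
      subst this
      exact ⟨0, le_refl _, le_refl _, le_antisymm hq hp⟩
  | succ q ih =>
      by_cases h : S n a (q + 1) = v
      · exact ⟨q + 1, hpq, le_refl _, h⟩
      · have hlt : S n a (q + 1) < v := lt_of_le_of_ne hq h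
        have hpq' : p ≤ q := by
          rcases Nat.lt_or_ge p (q + 1) with h' | h'
          · omega
          · exfalso
            have : p = q + 1 := le_antisymm hpq h'
            subst this
            exact absurd hp (not_le.2 hlt)
        have hq' : S n a q ≤ v := by
          have := S_step (n := n) (a := a) q
          omega
        obtain ⟨m, h1, h2, h3⟩ := ih hpq' hq'
        exact ⟨m, h1, Nat.le_succ_of_le h2, h3⟩


lemma cycle_count {n k : ℕ} {a : ℕ → ℕ} (hn : 0 < n) (hk : 0 < k)
    (hsum : (∑ i ∈ range n, (a i : ℤ)) - n = -(k : ℤ))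
    [DecidablePred fun r : ℕ => ∀ m, 1 ≤ m → m < n →
        (∑ i ∈ range m, (a ((r + i) % n) : ℤ)) - (m : ℤ) > -(k : ℤ)] :
    ((range n).filter (fun r => ∀ m, 1 ≤ m → m < n →
        (∑ i ∈ range m, (a ((r + i) % n) : ℤ)) - (m : ℤ) > -(k : ℤ))).card = k := by
  have hk' : (0 : ℤ) < (k : ℤ) := by exact_mod_cast hk
  have hSn : S n a n = -(k : ℤ) := by
    have h : S n a n = (∑ i ∈ range n, (a i : ℤ)) - n := by
      unfold S
      rw [Finset.sum_sub_distrib, Finset.sum_const, card_range, nsmul_eq_mul, mul_one]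
      congr 1
      exact Finset.sum_congr rfl fun i hi => by rw [Nat.mod_eq_of_lt (mem_range.1 hi)]
    rw [h, hsum]
  have hrot : ∀ r m : ℕ, (∑ i ∈ range m, (a ((r + i) % n) : ℤ)) - (m : ℤ)
      = S n a (r + m) - S n a r := by
    intro r m
    rw [S_add, Finset.sum_sub_distrib, Finset.sum_const, card_range, nsmul_eq_mul, mul_one]
    ring
  have hne : ((range n).image (S n a)).Nonempty :=
    (Finset.nonempty_range_iff.2 hn.ne').image _
  set M := ((range n).image (S n a)).min' hne with hM
  have hM_le : ∀ m < n, M ≤ S n a m := fun m hm =>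
    Finset.min'_le _ _ (Finset.mem_image_of_mem _ (mem_range.2 hm))
  have hM_mem : ∃ m0, m0 < n ∧ S n a m0 = M := by
    obtain ⟨m0, hm0, hm0'⟩ := Finset.mem_image.1 (Finset.min'_mem _ hne)
    exact ⟨m0, mem_range.1 hm0, hm0'⟩
  have hM1 : M ≤ 1 - (k : ℤ) := by
    have hstep := S_step (n := n) (a := a) (n - 1)
    have hn1 : n - 1 + 1 = n := Nat.succ_pred_eq_of_pos hn
    rw [hn1, hSn] at hstep
    have := hM_le (n - 1) (by omega)
    linarith
  have hequiv : ∀ r ∈ range n, ((∀ m, 1 ≤ m → m < n →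
      (∑ i ∈ range m, (a ((r + i) % n) : ℤ)) - (m : ℤ) > -(k : ℤ)) ↔
      ((∀ m < r, S n a r < S n a m) ∧ S n a r < M + k)) := by
    intro r hr'
    have hr : r < n := mem_range.1 hr'
    simp only [hrot]
    constructor
    · intro hC
      have h1 : ∀ m < r, S n a r < S n a m := by
        intro m hm
        have := hC (m + n - r) (by omega) (by omega)
        rw [show r + (m + n - r) = m + n by omega, S_period hn, hSn] at this
        linarith
      refine ⟨h1, ?_⟩
      obtain ⟨m0, hm0n, hm0⟩ := hM_mem
      rcases Nat.lt_or_ge r m0 with h | h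
      · have := hC (m0 - r) (by omega) (by omega)
        rw [show r + (m0 - r) = m0 by omega, hm0] at this
        linarith
      · rcases Nat.lt_or_ge m0 r with h' | h'
        · have := h1 m0 h'
          rw [hm0] at this
          linarith
        · have : m0 = r := le_antisymm h h'
          rw [← this, hm0]
          linarith
    · rintro ⟨h1, h2⟩ j hj1 hj2
      rcases lt_trichotomy (r + j) n with h | h | h
      · have := hM_le (r + j) h
        linarith
      · rw [h, hSn]
        have := h1 0 (by omega)
        rw [S_zero] at this
        linarith
      · rw [show r + j = (r + j - n) + n by omega, S_period hn, hSn]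
        have := h1 (r + j - n) (by omega)
        linarith
  have hcard : ((range n).filter (fun r => ∀ m, 1 ≤ m → m < n →
        (∑ i ∈ range m, (a ((r + i) % n) : ℤ)) - (m : ℤ) > -(k : ℤ))).card
      = (Finset.Icc M (M + (k : ℤ) - 1)).card := by
    apply Finset.card_bij (i := fun r _ => S n a r)
    · intro r hr
      rw [mem_filter] at hr
      have hQ := (hequiv r hr.1).1 hr.2
      exact Finset.mem_Icc.2 ⟨hM_le r (mem_range.1 hr.1), by linarith [hQ.2]⟩
    · intro r hr r' hr' hEq
      rw [mem_filter] at hr hr'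
      have hQ := (hequiv r hr.1).1 hr.2
      have hQ' := (hequiv r' hr'.1).1 hr'.2
      by_contra hne'
      rcases Nat.lt_or_ge r r' with h | h
      · have := hQ'.1 r h
        omega
      · have hlt : r' < r := by omega
        have := hQ.1 r' hlt
        omega
    · intro v hv
      rw [Finset.mem_Icc] at hv
      obtain ⟨m0, hm0n, hm0⟩ := hM_mem
      have hv0 : v ≤ 0 := by linarith [hv.2]
      have hex : ∃ m, S n a m = v := by
        obtain ⟨m, _, _, hm⟩ := exists_S_eq (n := n) (a := a) (Nat.zero_le m0) (v := v)
          (by rw [S_zero]; exact hv0) (by rw [hm0]; exact hv.1)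
        exact ⟨m, hm⟩
      have hrv : S n a (Nat.find hex) = v := Nat.find_spec hex
      have hrlt : Nat.find hex < n := by
        obtain ⟨m, _, hm2, hm3⟩ := exists_S_eq (n := n) (a := a) (Nat.zero_le m0) (v := v)
          (by rw [S_zero]; exact hv0) (by rw [hm0]; exact hv.1)
        exact lt_of_le_of_lt (le_trans (Nat.find_min' hex hm3) hm2) hm0n
      have hrec : ∀ m' < Nat.find hex, S n a (Nat.find hex) < S n a m' := by
        intro m' hm'
        have hne1 := Nat.find_min hex hm'
        have hge : ¬ S n a m' < v := by
          intro hlt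
          obtain ⟨m'', _, hm''2, hm''3⟩ := exists_S_eq (n := n) (a := a) (Nat.zero_le m') (v := v)
            (by rw [S_zero]; exact hv0) (le_of_lt hlt)
          have := Nat.find_min' hex hm''3
          omega
        rw [hrv]
        omega
      refine ⟨Nat.find hex, ?_, hrv⟩
      rw [mem_filter]
      refine ⟨mem_range.2 hrlt, (hequiv _ (mem_range.2 hrlt)).2
        ⟨hrec, by rw [hrv]; linarith [hv.2]⟩⟩
  rw [hcard, Int.card_Icc, show M + (k : ℤ) - 1 + 1 - M = (k : ℤ) by ring,
    Int.toNat_natCast]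




lemma sum_boole_ennreal (P : ℕ → Prop) [DecidablePred P] (s : Finset ℕ) :
    (∑ r ∈ s, if P r then (1 : ENNReal) else 0) = (#{x ∈ s | P x} : ENNReal) := by
  rw [Finset.sum_boole]

lemma cycle_count_sum {n k : ℕ} {a : ℕ → ℕ} (hn : 0 < n) (hk : 0 < k)
    (hsum : (∑ i ∈ range n, (a i : ℤ)) - n = -(k : ℤ))
    [inst : DecidablePred fun r : ℕ => ∀ m, 1 ≤ m → m < n →
        (∑ i ∈ range m, (a ((r + i) % n) : ℤ)) - (m : ℤ) > -(k : ℤ)] :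
    (∑ r ∈ range n, if (∀ m, 1 ≤ m → m < n →
        (∑ i ∈ range m, (a ((r + i) % n) : ℤ)) - (m : ℤ) > -(k : ℤ))
      then (1 : ENNReal) else 0) = (k : ENNReal) := by
  refine (sum_boole_ennreal _ (range n)).trans ?_
  exact_mod_cast cycle_count hn hk hsum

end CycleAux


/-- Probabilistic cycle lemma: for i.i.d. nonnegative integer random variables `ξᵢ`,
`P(∑_{i=1}^m (ξᵢ−1) > −k for all 1 ≤ m < n, ∑_{i=1}^n (ξᵢ−1) = −k)
  = (k/n) · P(∑_{i=1}^n (ξᵢ−1) = −k)`. -/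
theorem prob_cycle_lemma
    {Ω : Type*} [MeasurableSpace Ω] (μ : Measure Ω) [IsProbabilityMeasure μ]
    (ξ : ℕ → Ω → ℕ) (hmeas : ∀ i, Measurable (ξ i))
    (hindep : iIndepFun ξ μ)
    (hident : ∀ i j, IdentDistrib (ξ i) (ξ j) μ μ)
    (n k : ℕ) (hn : 0 < n) (hk : 0 < k) :
    μ {ω | (∀ m, 1 ≤ m → m < n →
            (∑ i ∈ range m, (ξ i ω : ℤ)) - m > -(k : ℤ)) ∧
          (∑ i ∈ range n, (ξ i ω : ℤ)) - n = -(k : ℤ)}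
      = ((k : ENNReal) / n) * μ {ω | (∑ i ∈ range n, (ξ i ω : ℤ)) - n = -(k : ℤ)} := by
  classical
  set ν : Measure ℕ := μ.map (ξ 0) with hν
  have hmod : ∀ r i : ℕ, (r + i % n) % n = (r + i) % n := fun r i => Nat.add_mod_mod r i n
  set Pa : (ℕ → ℕ) → Prop := fun a =>
    (∀ m, 1 ≤ m → m < n → (∑ i ∈ range m, (a i : ℤ)) - (m : ℤ) > -(k : ℤ)) ∧
    (∑ i ∈ range n, (a i : ℤ)) - (n : ℤ) = -(k : ℤ) with hPa
  have Pa_congr : ∀ a b : ℕ → ℕ, (∀ i < n, a i = b i) → (Pa a ↔ Pa b) := by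
    intro a b hab
    have hs : ∀ m ≤ n, (∑ i ∈ range m, (a i : ℤ)) = ∑ i ∈ range m, (b i : ℤ) :=
      fun m hm => Finset.sum_congr rfl fun i hi => by
        rw [hab i (lt_of_lt_of_le (mem_range.1 hi) hm)]
    simp only [hPa]
    constructor <;> rintro ⟨h1, h2⟩
    · exact ⟨fun m h1m h2m => by rw [← hs m (le_of_lt h2m)]; exact h1 m h1m h2m,
        by rw [← hs n le_rfl]; exact h2⟩
    · exact ⟨fun m h1m h2m => by rw [hs m (le_of_lt h2m)]; exact h1 m h1m h2m,
        by rw [hs n le_rfl]; exact h2⟩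
  set A : ℕ → Set Ω := fun r => {ω | Pa (fun i => ξ ((r + i) % n) ω)} with hA
  set E : Set Ω := {ω | (∑ i ∈ range n, (ξ i ω : ℤ)) - (n : ℤ) = -(k : ℤ)} with hE
  set Y : ℕ → Ω → (Fin n → ℕ) := fun r ω i => ξ ((r + ↑i) % n) ω with hY
  have hYmeas : ∀ r, Measurable (Y r) := fun r => measurable_pi_lambda _ (fun i => hmeas _)
  set B : Set (Fin n → ℕ) := {v | Pa (fun i => v ⟨i % n, Nat.mod_lt _ hn⟩)} with hB
  have hBmeas : MeasurableSet B := (Set.to_countable B).measurableSet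
  have hAY : ∀ r, A r = Y r ⁻¹' B := by
    intro r
    ext ω
    simp only [hA, hB, hY, Set.mem_setOf_eq, Set.mem_preimage]
    exact Pa_congr _ _ (fun i hi => by simp [hmod])
  have hAmeas : ∀ r, MeasurableSet (A r) := fun r => (hAY r) ▸ hYmeas r hBmeas
  -- measure of each fiber
  have hprod : ∀ (r : ℕ) (v : Fin n → ℕ),
      μ {ω | Y r ω = v} = ∏ i : Fin n, ν {v i} := by
    intro r v
    have inv_lt : ∀ j : ℕ, (j + (n - r % n)) % n < n := fun j => Nat.mod_lt _ hn
    set s : ℕ → Set Ω := fun j => ξ j ⁻¹' {v ⟨(j + (n - r % n)) % n, inv_lt j⟩} with hs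
    have h1 : {ω | Y r ω = v} = ⋂ j ∈ range n, s j := by
      ext ω
      simp only [Set.mem_setOf_eq, Set.mem_iInter, hs, Set.mem_preimage,
        Set.mem_singleton_iff, funext_iff, hY]
      constructor
      · intro h j hj
        have hj' := mem_range.1 hj
        have h2 : ξ ((r + (j + (n - r % n)) % n) % n) ω
            = v ⟨(j + (n - r % n)) % n, inv_lt j⟩ :=
          h ⟨(j + (n - r % n)) % n, inv_lt j⟩
        rwa [CycleAux.mod_inv2 hn r j hj'] at h2
      · intro h i
        have hj : (r + ↑i) % n < n := Nat.mod_lt _ hn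
        have h2 := h _ (mem_range.2 hj)
        have hii : (⟨((r + ↑i) % n + (n - r % n)) % n, inv_lt _⟩ : Fin n) = i :=
          Fin.ext (CycleAux.mod_inv1 hn r i i.isLt)
        rw [hii] at h2
        exact h2
    rw [h1, hindep.meas_biInter
      (fun j _ => ⟨{v ⟨(j + (n - r % n)) % n, inv_lt j⟩}, measurableSet_singleton _, rfl⟩)]
    have h2 : ∀ j, μ (s j) = ν {v ⟨(j + (n - r % n)) % n, inv_lt j⟩} := by
      intro j
      rw [hs, hν, (hident 0 j).map_eq,
        Measure.map_apply (hmeas j) (measurableSet_singleton _)]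
    calc ∏ j ∈ range n, μ (s j)
        = ∏ j ∈ range n, ν {v ⟨(j + (n - r % n)) % n, inv_lt j⟩} :=
          Finset.prod_congr rfl fun j _ => h2 j
      _ = ∏ i : Fin n, ν {v i} := by
          apply Finset.prod_nbij' (i := fun j => (⟨(j + (n - r % n)) % n, inv_lt j⟩ : Fin n))
            (j := fun i : Fin n => (r + ↑i) % n)
          · intro j hj; exact Finset.mem_univ _
          · intro i _; exact mem_range.2 (Nat.mod_lt _ hn)
          · intro j hj
            exact CycleAux.mod_inv2 hn r j (mem_range.1 hj)
          · intro i _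
            exact Fin.ext (CycleAux.mod_inv1 hn r i i.isLt)
          · intro j hj; rfl
  -- measure of A r does not depend on r
  have hmeasA : ∀ r, μ (A r) = ∑' (v : B), ∏ i : Fin n, ν {(v : Fin n → ℕ) i} := by
    intro r
    have hU : A r = ⋃ (v : B), {ω | Y r ω = (v : Fin n → ℕ)} := by
      rw [hAY r]; ext ω
      simp only [Set.mem_preimage, Set.mem_iUnion, Set.mem_setOf_eq]
      constructor
      · intro h; exact ⟨⟨Y r ω, h⟩, rfl⟩
      · rintro ⟨v, hv⟩; rw [hv]; exact v.2
    rw [hU, measure_iUnion ?_ ?_]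
    · exact tsum_congr fun v => hprod r v
    · intro v w hvw
      simp only [Set.disjoint_left, Set.mem_setOf_eq]
      intro ω h1 h2
      exact hvw (Subtype.ext (h1.symm.trans h2))
    · intro v
      exact hYmeas r ((Set.to_countable {(v : Fin n → ℕ)}).measurableSet)
  have hAeq : ∀ r, μ (A r) = μ (A 0) := fun r => by rw [hmeasA r, hmeasA 0]
  -- E is measurable
  have hEmeas : MeasurableSet E := by
    have hg : Measurable (fun ω => ∑ i ∈ range n, (ξ i ω : ℤ)) :=
      Finset.measurable_sum _ (fun i _ => measurable_from_top.comp (hmeas i))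
    exact hg ((Set.to_countable {s : ℤ | s - (n : ℤ) = -(k : ℤ)}).measurableSet)
  -- pointwise count
  have hpoint : ∀ ω, (∑ r ∈ range n, (A r).indicator (fun _ => (1 : ENNReal)) ω)
      = E.indicator (fun _ => (k : ENNReal)) ω := by
    intro ω
    have hsum_rot : ∀ r, (∑ i ∈ range n, (ξ ((r + i) % n) ω : ℤ))
        = ∑ i ∈ range n, (ξ i ω : ℤ) :=
      fun r => CycleAux.sum_rot hn (fun j => (ξ j ω : ℤ)) r
    by_cases hω : ω ∈ E
    · rw [Set.indicator_of_mem hω]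
      have hiff : ∀ r ∈ range n, (ω ∈ A r) ↔ (∀ m, 1 ≤ m → m < n →
          (∑ i ∈ range m, (ξ ((r + i) % n) ω : ℤ)) - (m : ℤ) > -(k : ℤ)) := by
        intro r _
        simp only [hA, Set.mem_setOf_eq, hPa]
        constructor
        · exact fun h => h.1
        · intro h
          refine ⟨h, ?_⟩
          rw [hsum_rot r]
          exact hω
      calc ∑ r ∈ range n, (A r).indicator (fun _ => (1 : ENNReal)) ω
          = ∑ r ∈ range n, if (∀ m, 1 ≤ m → m < n →
              (∑ i ∈ range m, (ξ ((r + i) % n) ω : ℤ)) - (m : ℤ) > -(k : ℤ))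
            then (1 : ENNReal) else 0 :=
            Finset.sum_congr rfl (fun r hr => by
              rw [Set.indicator_apply]
              by_cases h : ω ∈ A r
              · rw [if_pos h, if_pos ((hiff r hr).1 h)]
              · rw [if_neg h, if_neg (fun hc => h ((hiff r hr).2 hc))])
        _ = (k : ENNReal) := CycleAux.cycle_count_sum hn hk hω
              (inst := fun r => Classical.propDecidable _)
    · rw [Set.indicator_of_notMem hω]
      refine Finset.sum_eq_zero fun r hr => ?_
      rw [Set.indicator_of_notMem]
      intro hmem
      refine hω ?_
      have h2 := hmem.2
      rw [hE]
      simp only [Set.mem_setOf_eq]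
      rw [← hsum_rot r]
      exact h2
  -- summing the measures
  have hsum_meas : ∑ r ∈ range n, μ (A r) = (k : ENNReal) * μ E := by
    have h1 : ∀ r ∈ range n, μ (A r)
        = ∫⁻ ω, (A r).indicator (fun _ => (1 : ENNReal)) ω ∂μ :=
      fun r _ => (lintegral_indicator_one (hAmeas r)).symm
    rw [Finset.sum_congr rfl h1,
      ← lintegral_finset_sum _ (fun r _ => measurable_const.indicator (hAmeas r))]
    calc ∫⁻ ω, ∑ r ∈ range n, (A r).indicator (fun _ => (1 : ENNReal)) ω ∂μ
        = ∫⁻ ω, E.indicator (fun _ => (k : ENNReal)) ω ∂μ := lintegral_congr hpoint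
      _ = (k : ENNReal) * μ E := lintegral_indicator_const hEmeas _
  have hn_sum : ∑ r ∈ range n, μ (A r) = (n : ENNReal) * μ (A 0) := by
    rw [Finset.sum_congr rfl (fun r _ => hAeq r), Finset.sum_const, card_range,
      nsmul_eq_mul]
  have hkey : (n : ENNReal) * μ (A 0) = (k : ENNReal) * μ E := by
    rw [← hn_sum, hsum_meas]
  have hμA : μ (A 0) = ((k : ENNReal) / n) * μ E := by
    have hn0 : (n : ENNReal) ≠ 0 := Nat.cast_ne_zero.2 hn.ne'
    have hnt : (n : ENNReal) ≠ ⊤ := ENNReal.natCast_ne_top n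
    calc μ (A 0) = (n : ENNReal)⁻¹ * ((n : ENNReal) * μ (A 0)) := by
          rw [← mul_assoc, ENNReal.inv_mul_cancel hn0 hnt, one_mul]
      _ = (n : ENNReal)⁻¹ * ((k : ENNReal) * μ E) := by rw [hkey]
      _ = ((k : ENNReal) / n) * μ E := by
          rw [← mul_assoc, ← ENNReal.div_eq_inv_mul]
  have hL : {ω | (∀ m, 1 ≤ m → m < n →
            (∑ i ∈ range m, (ξ i ω : ℤ)) - (m : ℤ) > -(k : ℤ)) ∧
          (∑ i ∈ range n, (ξ i ω : ℤ)) - (n : ℤ) = -(k : ℤ)} = A 0 := by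
    ext ω
    simp only [hA, Set.mem_setOf_eq]
    exact Pa_congr (fun i => ξ i ω) (fun i => ξ ((0 + i) % n) ω)
      (fun i hi => by
        show ξ i ω = ξ ((0 + i) % n) ω
        rw [Nat.zero_add, Nat.mod_eq_of_lt hi])
  rw [hL, hμA]
end
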